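/- Let (E,‖·‖_E) be a normed real vector space, let T ∈ (0,∞), α ∈ [0,1], β ∈ [α,1], let θ be a partition of [0,T], and let f, g : [0,T] → E be functions. Then |f − [g]_θ|_{C^α([0,T],E)} ≤ (2·(d_max(θ))^{1−α} / d_min(θ)) · sup_{t∈θ} ‖f(t) − g(t)‖_E + 2·(d_max(θ))^{β−α} · |f|_{C^β([0,T],E)} and ‖f − [g]_θ‖_{C^α([0,T],E)} ≤ (2·(d_max(θ))^{1−α}/d_min(θ) + 1) · sup_{t∈θ} ‖f(t) − g(t)‖_E + (2·(d_max(θ))^{−α} + 2^{−β}) · (d_max(θ))^β · |f|_{C^β([0,T],E)} (all in [0,∞]). -/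

import Mathlib

open ENNReal

/-- The Hölder seminorm (exponent `r`) of `f` on `[0,T]`. -/
noncomputable def holderSemiOn {E : Type} [NormedAddCommGroup E]
    (T : ℝ) (r : ℝ) (f : ℝ → E) : ℝ≥0∞ :=
  ⨆ (s : ℝ) (t : ℝ) (_ : s ∈ Set.Icc (0:ℝ) T) (_ : t ∈ Set.Icc (0:ℝ) T)
    (_ : s ≠ t), (‖f s - f t‖₊ : ℝ≥0∞) / ENNReal.ofReal (|s - t| ^ r)

/-- The supremum norm of `f` on `[0,T]`. -/
noncomputable def supNormOn {E : Type} [NormedAddCommGroup E]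
    (T : ℝ) (f : ℝ → E) : ℝ≥0∞ :=
  ⨆ (t : ℝ) (_ : t ∈ Set.Icc (0:ℝ) T), (‖f t‖₊ : ℝ≥0∞)

/-- The Hölder norm (exponent `r`) of `f` on `[0,T]`. -/
noncomputable def holderNormOn {E : Type} [NormedAddCommGroup E]
    (T : ℝ) (r : ℝ) (f : ℝ → E) : ℝ≥0∞ :=
  supNormOn T f + holderSemiOn T r f

/-- Maximal mesh size of the partition with nodes `θ 0 < θ 1 < … < θ K`. -/
noncomputable def dMax (K : ℕ) (θ : ℕ → ℝ) : ℝ := ⨆ j : Fin K, (θ (j + 1) - θ j)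

/-- Minimal mesh size of the partition with nodes `θ 0 < θ 1 < … < θ K`. -/
noncomputable def dMin (K : ℕ) (θ : ℕ → ℝ) : ℝ := ⨅ j : Fin K, (θ (j + 1) - θ j)

section Aux

set_option linter.unusedVariables false
set_option linter.unusedSectionVars false
set_option linter.unreachableTactic false
set_option linter.unusedTactic false
set_option linter.deprecated false

lemma theta_mono (K : ℕ) (θ : ℕ → ℝ) (hθmono : ∀ j, j < K → θ j < θ (j + 1)) :
    ∀ i j, i ≤ j → j ≤ K → θ i ≤ θ j := by
  intro i j hij hjK
  induction j with
  | zero => simp [Nat.le_zero.1 hij]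
  | succ n ih =>
    rcases Nat.lt_or_ge i (n+1) with h | h
    · exact le_trans (ih (by omega) (by omega)) (le_of_lt (hθmono n (by omega)))
    · have : i = n + 1 := by omega
      simp [this]

lemma mesh_lb (K : ℕ) (θ : ℕ → ℝ) {j : ℕ} (hj : j < K) :
    dMin K θ ≤ θ (j+1) - θ j := by
  have := ciInf_le (f := fun j : Fin K => θ (j + 1) - θ j) (Set.finite_range _).bddBelow ⟨j, hj⟩
  simpa [dMin] using this

lemma mesh_ub (K : ℕ) (θ : ℕ → ℝ) {j : ℕ} (hj : j < K) :
    θ (j+1) - θ j ≤ dMax K θ := by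
  have := le_ciSup (f := fun j : Fin K => θ (j + 1) - θ j) (Set.finite_range _).bddAbove ⟨j, hj⟩
  simpa [dMax] using this

lemma dMin_pos (K : ℕ) (hK : 1 ≤ K) (θ : ℕ → ℝ)
    (hθmono : ∀ j, j < K → θ j < θ (j + 1)) : 0 < dMin K θ := by
  have hne : Nonempty (Fin K) := ⟨⟨0, hK⟩⟩
  obtain ⟨j0, hj0⟩ := Finite.exists_min (fun j : Fin K => θ (j + 1) - θ j)
  have h1 : θ ((j0 : ℕ) + 1) - θ j0 ≤ dMin K θ := le_ciInf hj0
  have h2 := hθmono j0 j0.2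
  linarith

lemma dMin_le_dMax (K : ℕ) (hK : 1 ≤ K) (θ : ℕ → ℝ) : dMin K θ ≤ dMax K θ :=
  le_trans (mesh_lb K θ hK) (mesh_ub K θ hK)

lemma exists_interval (K : ℕ) (hK : 1 ≤ K) (θ : ℕ → ℝ)
    (hθmono : ∀ j, j < K → θ j < θ (j + 1)) {s : ℝ}
    (h0 : θ 0 ≤ s) (hsK : s ≤ θ K) :
    ∃ j, j < K ∧ s ∈ Set.Icc (θ j) (θ (j+1)) := by
  have main : ∀ n, n ≤ K → s ≤ θ n → ∃ j, j < K ∧ s ∈ Set.Icc (θ j) (θ (j+1)) := by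
    intro n
    induction n with
    | zero =>
      intro _ hs
      refine ⟨0, hK, h0, ?_⟩
      have hs0 : s = θ 0 := le_antisymm hs h0
      rw [hs0]; exact (hθmono 0 hK).le
    | succ n ih =>
      intro hn hs
      rcases le_or_gt (θ n) s with h | h
      · exact ⟨n, by omega, h, hs⟩
      · exact ih (by omega) h.le
  exact main K le_rfl hsK

lemma jensen2 {p lam mu a b : ℝ} (hp0 : 0 ≤ p) (hp1 : p ≤ 1)
    (hl : 0 ≤ lam) (hm : 0 ≤ mu) (hlm : lam + mu = 1) (ha : 0 ≤ a) (hb : 0 ≤ b) :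
    lam * a ^ p + mu * b ^ p ≤ (lam * a + mu * b) ^ p := by
  have := (Real.concaveOn_rpow hp0 hp1).2 (Set.mem_Ici.2 ha) (Set.mem_Ici.2 hb) hl hm hlm
  simpa [smul_eq_mul] using this

lemma Ppart_final {dn dm Dr ρ α : ℝ} (hdn : 0 < dn) (hdm : dn ≤ dm) (hDr : 0 ≤ Dr)
    (hρ : 0 < ρ) (hα0 : 0 ≤ α) (hα1 : α ≤ 1) {X : ℝ}
    (h1 : X ≤ 2 * Dr / dn * ρ) (h2 : X ≤ 2 * Dr) :
    X ≤ 2 * dm ^ (1 - α) / dn * Dr * ρ ^ α := by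
  have hdm0 : 0 < dm := lt_of_lt_of_le hdn hdm
  have hρα : 0 ≤ ρ ^ α := Real.rpow_nonneg hρ.le α
  rw [div_mul_eq_mul_div, div_mul_eq_mul_div, le_div_iff₀ hdn]
  rcases le_or_gt ρ dm with hc | hc
  · have e : ρ ^ (1 - α) * ρ ^ α = ρ := by
      rw [← Real.rpow_add hρ]; norm_num
    have m : ρ ^ (1 - α) ≤ dm ^ (1 - α) := Real.rpow_le_rpow hρ.le hc (by linarith)
    have hXdn : X * dn ≤ 2 * Dr * ρ := by
      have : 2 * Dr / dn * ρ * dn = 2 * Dr * ρ := by field_simp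
      nlinarith
    nlinarith [mul_nonneg (mul_nonneg (by norm_num : (0:ℝ) ≤ 2) hDr) hρα]
  · have key : dn ≤ dm ^ (1 - α) * ρ ^ α := by
      have e : dn ^ (1 - α) * dn ^ α = dn := by
        rw [← Real.rpow_add hdn]; norm_num
      have m1 : dn ^ (1 - α) ≤ dm ^ (1 - α) := Real.rpow_le_rpow hdn.le hdm (by linarith)
      have m2 : dn ^ α ≤ ρ ^ α := Real.rpow_le_rpow hdn.le (by linarith) hα0
      nlinarith [Real.rpow_nonneg hdn.le (1 - α), Real.rpow_nonneg hdn.le α,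
        Real.rpow_nonneg hdm0.le (1 - α)]
    have : X * dn ≤ 2 * Dr * dn := by nlinarith
    nlinarith

lemma psipart_final {dm Hr ρ α β : ℝ} (hdm : 0 < dm) (hHr : 0 ≤ Hr) (hρ : 0 < ρ)
    (hα0 : 0 ≤ α) (hαβ : α ≤ β) (hβ1 : β ≤ 1) {X : ℝ}
    (h1 : ρ ≤ dm → X ≤ 2 * Hr * ρ ^ β) (h2 : dm < ρ → X ≤ 2 * Hr * (dm / 2) ^ β) :
    X ≤ 2 * dm ^ (β - α) * Hr * ρ ^ α := by
  have hρα : 0 ≤ ρ ^ α := Real.rpow_nonneg hρ.le α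
  have hdmba : 0 ≤ dm ^ (β - α) := Real.rpow_nonneg hdm.le (β - α)
  rcases le_or_gt ρ dm with hc | hc
  · have e : ρ ^ (β - α) * ρ ^ α = ρ ^ β := by
      rw [← Real.rpow_add hρ]; ring_nf
    have m : ρ ^ (β - α) ≤ dm ^ (β - α) := Real.rpow_le_rpow hρ.le hc (by linarith)
    calc X ≤ 2 * Hr * ρ ^ β := h1 hc
      _ = 2 * Hr * (ρ ^ (β - α) * ρ ^ α) := by rw [e]
      _ ≤ 2 * Hr * (dm ^ (β - α) * ρ ^ α) := by gcongr
      _ = 2 * dm ^ (β - α) * Hr * ρ ^ α := by ring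
  · have m1 : (dm / 2) ^ β ≤ dm ^ β := Real.rpow_le_rpow (by positivity) (by linarith) (by linarith)
    have e : dm ^ (β - α) * dm ^ α = dm ^ β := by
      rw [← Real.rpow_add hdm]; ring_nf
    have m2 : dm ^ α ≤ ρ ^ α := Real.rpow_le_rpow hdm.le hc.le hα0
    calc X ≤ 2 * Hr * (dm / 2) ^ β := h2 hc
      _ ≤ 2 * Hr * dm ^ β := by gcongr
      _ = 2 * Hr * (dm ^ (β - α) * dm ^ α) := by rw [e]
      _ ≤ 2 * Hr * (dm ^ (β - α) * ρ ^ α) := by gcongr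
      _ = 2 * dm ^ (β - α) * Hr * ρ ^ α := by ring

variable {E : Type} [NormedAddCommGroup E] [NormedSpace ℝ E]

/-- decomposition of `f s - gi s` on one interval `[p,q]`. -/
lemma decomp (f g gi : ℝ → E) (p q s : ℝ) (hpq : p < q)
    (hgis : gi s = ((q - s) / (q - p)) • g p + ((s - p) / (q - p)) • g q) :
    f s - gi s =
      (((q - s) / (q - p)) • (f s - f p) + ((s - p) / (q - p)) • (f s - f q))
      + (((q - s) / (q - p)) • (f p - g p) + ((s - p) / (q - p)) • (f q - g q)) := by
  have hne : q - p ≠ 0 := by linarith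
  rw [hgis]
  match_scalars <;> field_simp <;> ring

/-- sup bound for the interpolation error part. -/
lemma psi_sup (f : ℝ → E) {β Hr T p q s : ℝ} (hβ0 : 0 ≤ β) (hβ1 : β ≤ 1)
    (hHr : 0 ≤ Hr)
    (hH : ∀ x ∈ Set.Icc (0:ℝ) T, ∀ y ∈ Set.Icc (0:ℝ) T, ‖f x - f y‖ ≤ Hr * |x - y| ^ β)
    (hpq : p < q) (hp : p ∈ Set.Icc (0:ℝ) T) (hq : q ∈ Set.Icc (0:ℝ) T)
    (hs : s ∈ Set.Icc p q) :
    ‖((q - s) / (q - p)) • (f s - f p) + ((s - p) / (q - p)) • (f s - f q)‖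
      ≤ Hr * (2 * ((q - s) * (s - p)) / (q - p)) ^ β := by
  have hΔ : 0 < q - p := by linarith
  have hsp : 0 ≤ s - p := by linarith [hs.1]
  have hqs : 0 ≤ q - s := by linarith [hs.2]
  have hl : 0 ≤ (q - s) / (q - p) := div_nonneg hqs hΔ.le
  have hm : 0 ≤ (s - p) / (q - p) := div_nonneg hsp hΔ.le
  have hlm : (q - s) / (q - p) + (s - p) / (q - p) = 1 := by field_simp; ring
  have hsT : s ∈ Set.Icc (0:ℝ) T := ⟨le_trans hp.1 hs.1, le_trans hs.2 hq.2⟩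
  have h1 : ‖f s - f p‖ ≤ Hr * (s - p) ^ β := by
    have := hH s hsT p hp
    rwa [abs_of_nonneg hsp] at this
  have h2 : ‖f s - f q‖ ≤ Hr * (q - s) ^ β := by
    have := hH s hsT q hq
    rwa [abs_sub_comm, abs_of_nonneg hqs] at this
  calc ‖((q - s) / (q - p)) • (f s - f p) + ((s - p) / (q - p)) • (f s - f q)‖
      ≤ ((q - s) / (q - p)) * ‖f s - f p‖ + ((s - p) / (q - p)) * ‖f s - f q‖ := by
        refine le_trans (norm_add_le _ _) ?_
        rw [norm_smul, norm_smul, Real.norm_eq_abs, Real.norm_eq_abs,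
          abs_of_nonneg hl, abs_of_nonneg hm]
    _ ≤ ((q - s) / (q - p)) * (Hr * (s - p) ^ β) + ((s - p) / (q - p)) * (Hr * (q - s) ^ β) := by
        gcongr
    _ = Hr * (((q - s) / (q - p)) * (s - p) ^ β + ((s - p) / (q - p)) * (q - s) ^ β) := by ring
    _ ≤ Hr * (((q - s) / (q - p)) * (s - p) + ((s - p) / (q - p)) * (q - s)) ^ β := by
        have := jensen2 hβ0 hβ1 hl hm hlm hsp hqs
        exact mul_le_mul_of_nonneg_left this hHr
    _ = Hr * (2 * ((q - s) * (s - p)) / (q - p)) ^ β := by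
        congr 1
        field_simp
        ring

/-- sup bound for the node-error part. -/
lemma P_sup (f g : ℝ → E) {Dr p q s : ℝ}
    (hpq : p < q) (hs : s ∈ Set.Icc p q)
    (hDp : ‖f p - g p‖ ≤ Dr) (hDq : ‖f q - g q‖ ≤ Dr) :
    ‖((q - s) / (q - p)) • (f p - g p) + ((s - p) / (q - p)) • (f q - g q)‖ ≤ Dr := by
  have hΔ : 0 < q - p := by linarith
  have hl : 0 ≤ (q - s) / (q - p) := div_nonneg (by linarith [hs.2]) hΔ.le
  have hm : 0 ≤ (s - p) / (q - p) := div_nonneg (by linarith [hs.1]) hΔ.le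
  have hlm : (q - s) / (q - p) + (s - p) / (q - p) = 1 := by field_simp; ring
  calc ‖((q - s) / (q - p)) • (f p - g p) + ((s - p) / (q - p)) • (f q - g q)‖
      ≤ ((q - s) / (q - p)) * ‖f p - g p‖ + ((s - p) / (q - p)) * ‖f q - g q‖ := by
        refine le_trans (norm_add_le _ _) ?_
        rw [norm_smul, norm_smul, Real.norm_eq_abs, Real.norm_eq_abs,
          abs_of_nonneg hl, abs_of_nonneg hm]
    _ ≤ ((q - s) / (q - p)) * Dr + ((s - p) / (q - p)) * Dr := by
        have hDr : 0 ≤ Dr := le_trans (norm_nonneg _) hDp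
        gcongr
    _ = Dr := by rw [← add_mul, hlm, one_mul]

/-- Hölder bound for interpolation error within one interval. -/
lemma psi_holder (f : ℝ → E) {β Hr T p q s t : ℝ} (hβ0 : 0 ≤ β) (hβ1 : β ≤ 1)
    (hHr : 0 ≤ Hr)
    (hH : ∀ x ∈ Set.Icc (0:ℝ) T, ∀ y ∈ Set.Icc (0:ℝ) T, ‖f x - f y‖ ≤ Hr * |x - y| ^ β)
    (hpq : p < q) (hp : p ∈ Set.Icc (0:ℝ) T) (hq : q ∈ Set.Icc (0:ℝ) T)
    (hs : s ∈ Set.Icc p q) (ht : t ∈ Set.Icc p q) :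
    ‖(((q - s) / (q - p)) • (f s - f p) + ((s - p) / (q - p)) • (f s - f q))
      - (((q - t) / (q - p)) • (f t - f p) + ((t - p) / (q - p)) • (f t - f q))‖
      ≤ 2 * Hr * |s - t| ^ β := by
  have hΔ : 0 < q - p := by linarith
  have hne : q - p ≠ 0 := hΔ.ne'
  have hsT : s ∈ Set.Icc (0:ℝ) T := ⟨le_trans hp.1 hs.1, le_trans hs.2 hq.2⟩
  have htT : t ∈ Set.Icc (0:ℝ) T := ⟨le_trans hp.1 ht.1, le_trans ht.2 hq.2⟩
  have hid : (((q - s) / (q - p)) • (f s - f p) + ((s - p) / (q - p)) • (f s - f q))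
      - (((q - t) / (q - p)) • (f t - f p) + ((t - p) / (q - p)) • (f t - f q))
      = (f s - f t) - ((s - t) / (q - p)) • (f q - f p) := by
    match_scalars <;> field_simp <;> ring
  rw [hid]
  have h1 : ‖f s - f t‖ ≤ Hr * |s - t| ^ β := hH s hsT t htT
  have h2 : ‖((s - t) / (q - p)) • (f q - f p)‖ ≤ |s - t| / (q - p) * (Hr * (q - p) ^ β) := by
    rw [norm_smul, Real.norm_eq_abs, abs_div, abs_of_pos hΔ]
    have := hH q hq p hp
    rw [abs_of_pos (by linarith : (0:ℝ) < q - p)] at this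
    gcongr
  have h3 : |s - t| / (q - p) * (Hr * (q - p) ^ β) ≤ Hr * |s - t| ^ β := by
    rcases eq_or_ne s t with rfl | hst
    · simp
      positivity
    · have hd : 0 < |s - t| := abs_pos.2 (sub_ne_zero.2 hst)
      have hdΔ : |s - t| ≤ q - p := by
        rw [abs_sub_le_iff]
        constructor <;> nlinarith [hs.1, hs.2, ht.1, ht.2]
      have e1 : (q - p) ^ (β - 1) ≤ |s - t| ^ (β - 1) :=
        Real.rpow_le_rpow_of_nonpos hd hdΔ (by linarith)
      have e2 : |s - t| * |s - t| ^ (β - 1) = |s - t| ^ β := by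
        rw [show β = 1 + (β - 1) by ring, Real.rpow_add hd, Real.rpow_one]
        ring_nf
      have e3 : (q - p) ^ β = (q - p) * (q - p) ^ (β - 1) := by
        rw [show β = 1 + (β - 1) by ring, Real.rpow_add hΔ, Real.rpow_one]
        ring_nf
      calc |s - t| / (q - p) * (Hr * (q - p) ^ β) = Hr * (|s - t| * (q - p) ^ (β - 1)) := by
            rw [e3]; field_simp
        _ ≤ Hr * (|s - t| * |s - t| ^ (β - 1)) := by gcongr
        _ = Hr * |s - t| ^ β := by rw [e2]
  calc ‖(f s - f t) - ((s - t) / (q - p)) • (f q - f p)‖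
      ≤ ‖f s - f t‖ + ‖((s - t) / (q - p)) • (f q - f p)‖ := norm_sub_le _ _
    _ ≤ Hr * |s - t| ^ β + Hr * |s - t| ^ β := add_le_add h1 (le_trans h2 h3)
    _ = 2 * Hr * |s - t| ^ β := by ring

lemma node_telescope (K : ℕ) (θ : ℕ → ℝ) (f g : ℝ → E) {Dr dn : ℝ}
    (hdn : 0 < dn) (hdnle : ∀ j, j < K → dn ≤ θ (j+1) - θ j)
    (hD : ∀ j, j ≤ K → ‖f (θ j) - g (θ j)‖ ≤ Dr) :
    ∀ i k, i ≤ k → k ≤ K →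
      ‖(f (θ k) - g (θ k)) - (f (θ i) - g (θ i))‖ ≤ 2 * Dr / dn * (θ k - θ i) := by
  have hDr0 : 0 ≤ Dr := le_trans (norm_nonneg _) (hD 0 (Nat.zero_le _))
  intro i k hik
  induction k with
  | zero =>
    intro _
    have : i = 0 := Nat.le_zero.1 hik
    subst this
    simp
  | succ k ih =>
    intro hkK
    rcases Nat.lt_or_ge i (k+1) with h | h
    · have hik' : i ≤ k := by omega
      have h1 : ‖(f (θ (k+1)) - g (θ (k+1))) - (f (θ k) - g (θ k))‖ ≤ 2 * Dr :=
        le_trans (norm_sub_le _ _) (by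
          have := hD (k+1) hkK
          have := hD k (by omega)
          linarith)
      have h2 := ih hik' (by omega)
      have h3 : 2 * Dr ≤ 2 * Dr / dn * (θ (k+1) - θ k) := by
        rw [div_mul_eq_mul_div, le_div_iff₀ hdn]
        nlinarith [hdnle k (by omega)]
      calc ‖(f (θ (k+1)) - g (θ (k+1))) - (f (θ i) - g (θ i))‖
          ≤ ‖(f (θ (k+1)) - g (θ (k+1))) - (f (θ k) - g (θ k))‖
            + ‖(f (θ k) - g (θ k)) - (f (θ i) - g (θ i))‖ := by
            have : (f (θ (k+1)) - g (θ (k+1))) - (f (θ i) - g (θ i))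
              = ((f (θ (k+1)) - g (θ (k+1))) - (f (θ k) - g (θ k)))
                + ((f (θ k) - g (θ k)) - (f (θ i) - g (θ i))) := by abel
            rw [this]; exact norm_add_le _ _
        _ ≤ 2 * Dr + 2 * Dr / dn * (θ k - θ i) := add_le_add h1 h2
        _ ≤ 2 * Dr / dn * (θ (k+1) - θ k) + 2 * Dr / dn * (θ k - θ i) := by linarith
        _ = 2 * Dr / dn * (θ (k+1) - θ i) := by ring
    · have : i = k + 1 := by omega
      subst this
      simp

set_option maxHeartbeats 1000000 in
/-- Lipschitz bound for the piecewise linear node-error part, across intervals. -/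
lemma P_cross (K : ℕ) (θ : ℕ → ℝ) (f g : ℝ → E) {Dr dn s t : ℝ} {j k : ℕ}
    (hθmono : ∀ j, j < K → θ j < θ (j + 1))
    (hdn : 0 < dn) (hdnle : ∀ j, j < K → dn ≤ θ (j+1) - θ j)
    (hD : ∀ j, j ≤ K → ‖f (θ j) - g (θ j)‖ ≤ Dr)
    (hjk : j ≤ k) (hk : k < K) (hst : s ≤ t)
    (hs : s ∈ Set.Icc (θ j) (θ (j+1))) (ht : t ∈ Set.Icc (θ k) (θ (k+1))) :
    ‖(((θ (j+1) - s) / (θ (j+1) - θ j)) • (f (θ j) - g (θ j))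
        + ((s - θ j) / (θ (j+1) - θ j)) • (f (θ (j+1)) - g (θ (j+1))))
      - (((θ (k+1) - t) / (θ (k+1) - θ k)) • (f (θ k) - g (θ k))
        + ((t - θ k) / (θ (k+1) - θ k)) • (f (θ (k+1)) - g (θ (k+1))))‖
      ≤ 2 * Dr / dn * (t - s) := by
  have hDr0 : 0 ≤ Dr := le_trans (norm_nonneg _) (hD 0 (Nat.zero_le _))
  have hj : j < K := lt_of_le_of_lt hjk hk
  have hΔj : 0 < θ (j+1) - θ j := by have := hθmono j hj; linarith
  have hΔk : 0 < θ (k+1) - θ k := by have := hθmono k hk; linarith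
  have hnej : θ (j+1) - θ j ≠ 0 := hΔj.ne'
  have hnek : θ (k+1) - θ k ≠ 0 := hΔk.ne'
  have hdnj := hdnle j hj
  have hdnk := hdnle k hk
  have step : ∀ (u Δ : ℝ), 0 ≤ u → dn ≤ Δ → ∀ (X : E), ‖X‖ ≤ 2 * Dr →
      u / Δ * ‖X‖ ≤ 2 * Dr / dn * u := by
    intro u Δ hu hΔle X hX
    have hΔ0 : 0 < Δ := lt_of_lt_of_le hdn hΔle
    have h1 : u / Δ ≤ u / dn := by
      rw [div_le_div_iff₀ hΔ0 hdn]; nlinarith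
    calc u / Δ * ‖X‖ ≤ u / dn * (2 * Dr) :=
          mul_le_mul h1 hX (norm_nonneg X) (div_nonneg hu hdn.le)
      _ = 2 * Dr / dn * u := by ring
  rcases eq_or_lt_of_le hjk with rfl | hjk'
  · -- same interval
    have hid : (((θ (j+1) - s) / (θ (j+1) - θ j)) • (f (θ j) - g (θ j))
        + ((s - θ j) / (θ (j+1) - θ j)) • (f (θ (j+1)) - g (θ (j+1))))
      - (((θ (j+1) - t) / (θ (j+1) - θ j)) • (f (θ j) - g (θ j))
        + ((t - θ j) / (θ (j+1) - θ j)) • (f (θ (j+1)) - g (θ (j+1))))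
      = ((t - s) / (θ (j+1) - θ j)) • ((f (θ j) - g (θ j)) - (f (θ (j+1)) - g (θ (j+1)))) := by
      match_scalars <;> field_simp <;> ring
    rw [hid, norm_smul, Real.norm_eq_abs, abs_div, abs_of_pos hΔj,
      abs_of_nonneg (by linarith : (0:ℝ) ≤ t - s)]
    have hnorm : ‖(f (θ j) - g (θ j)) - (f (θ (j+1)) - g (θ (j+1)))‖ ≤ 2 * Dr :=
      le_trans (norm_sub_le _ _) (by
        have := hD j (by omega); have := hD (j+1) (by omega); linarith)
    exact step _ _ (by linarith) hdnj _ hnorm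
  · -- different intervals : j + 1 ≤ k
    have hj1k : j + 1 ≤ k := hjk'
    have hmid : θ (j+1) ≤ θ k := theta_mono K θ hθmono (j+1) k hj1k (by omega)
    set Nj := f (θ j) - g (θ j) with hNj
    set Nj1 := f (θ (j+1)) - g (θ (j+1)) with hNj1
    set Nk := f (θ k) - g (θ k) with hNk
    set Nk1 := f (θ (k+1)) - g (θ (k+1)) with hNk1
    have hid1 : (((θ (j+1) - s) / (θ (j+1) - θ j)) • Nj
        + ((s - θ j) / (θ (j+1) - θ j)) • Nj1) - Nj1
        = ((θ (j+1) - s) / (θ (j+1) - θ j)) • (Nj - Nj1) := by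
      match_scalars <;> field_simp <;> ring
    have hid2 : (((θ (k+1) - t) / (θ (k+1) - θ k)) • Nk
        + ((t - θ k) / (θ (k+1) - θ k)) • Nk1) - Nk
        = ((t - θ k) / (θ (k+1) - θ k)) • (Nk1 - Nk) := by
      match_scalars <;> field_simp <;> ring
    have b1 : ‖(((θ (j+1) - s) / (θ (j+1) - θ j)) • Nj
        + ((s - θ j) / (θ (j+1) - θ j)) • Nj1) - Nj1‖ ≤ 2 * Dr / dn * (θ (j+1) - s) := by
      rw [hid1, norm_smul, Real.norm_eq_abs, abs_div, abs_of_pos hΔj,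
        abs_of_nonneg (by linarith [hs.2] : (0:ℝ) ≤ θ (j+1) - s)]
      have hnorm : ‖Nj - Nj1‖ ≤ 2 * Dr :=
        le_trans (norm_sub_le _ _) (by
          have := hD j (by omega); have := hD (j+1) (by omega); linarith)
      exact step _ _ (by linarith [hs.2]) hdnj _ hnorm
    have b2 : ‖(((θ (k+1) - t) / (θ (k+1) - θ k)) • Nk
        + ((t - θ k) / (θ (k+1) - θ k)) • Nk1) - Nk‖ ≤ 2 * Dr / dn * (t - θ k) := by
      rw [hid2, norm_smul, Real.norm_eq_abs, abs_div, abs_of_pos hΔk,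
        abs_of_nonneg (by linarith [ht.1] : (0:ℝ) ≤ t - θ k)]
      have hnorm : ‖Nk1 - Nk‖ ≤ 2 * Dr :=
        le_trans (norm_sub_le _ _) (by
          have := hD k (by omega); have := hD (k+1) (by omega); linarith)
      exact step _ _ (by linarith [ht.1]) hdnk _ hnorm
    have b3 : ‖Nk - Nj1‖ ≤ 2 * Dr / dn * (θ k - θ (j+1)) :=
      node_telescope K θ f g hdn hdnle hD (j+1) k hj1k (by omega)
    set A := ((θ (j+1) - s) / (θ (j+1) - θ j)) • Nj
        + ((s - θ j) / (θ (j+1) - θ j)) • Nj1 with hA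
    set B := ((θ (k+1) - t) / (θ (k+1) - θ k)) • Nk
        + ((t - θ k) / (θ (k+1) - θ k)) • Nk1 with hB
    have hAB : A - B = ((A - Nj1) - (Nk - Nj1)) - (B - Nk) := by abel
    calc ‖A - B‖ = ‖((A - Nj1) - (Nk - Nj1)) - (B - Nk)‖ := by rw [hAB]
      _ ≤ (‖A - Nj1‖ + ‖Nk - Nj1‖) + ‖B - Nk‖ := by
          refine le_trans (norm_sub_le _ _) ?_
          exact add_le_add (norm_sub_le _ _) le_rfl
      _ ≤ (2 * Dr / dn * (θ (j+1) - s) + 2 * Dr / dn * (θ k - θ (j+1)))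
            + 2 * Dr / dn * (t - θ k) := add_le_add (add_le_add b1 b3) b2
      _ = 2 * Dr / dn * (t - s) := by ring

set_option maxHeartbeats 2000000 in
/-- pointwise sup bound for `f - gi` on `[0,T]`. -/
lemma sup_pointwise (T : ℝ) (β : ℝ) (hβ0 : 0 ≤ β) (hβ1 : β ≤ 1)
    (K : ℕ) (hK : 1 ≤ K) (θ : ℕ → ℝ) (hθ0 : θ 0 = 0) (hθK : θ K = T)
    (hθmono : ∀ j, j < K → θ j < θ (j + 1))
    (f g gi : ℝ → E)
    (hgi : ∀ j, j < K → ∀ s ∈ Set.Icc (θ j) (θ (j + 1)),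
        gi s = ((θ (j + 1) - s) / (θ (j + 1) - θ j)) • g (θ j)
            + ((s - θ j) / (θ (j + 1) - θ j)) • g (θ (j + 1)))
    {Dr Hr : ℝ} (hHr : 0 ≤ Hr)
    (hD : ∀ j, j ≤ K → ‖f (θ j) - g (θ j)‖ ≤ Dr)
    (hH : ∀ x ∈ Set.Icc (0:ℝ) T, ∀ y ∈ Set.Icc (0:ℝ) T, ‖f x - f y‖ ≤ Hr * |x - y| ^ β)
    {s : ℝ} (hs : s ∈ Set.Icc (0:ℝ) T) :
    ‖f s - gi s‖ ≤ Dr + 2 ^ (-β) * (dMax K θ) ^ β * Hr := by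
  obtain ⟨j, hj, hsj⟩ := exists_interval K hK θ hθmono (s := s) (by rw [hθ0]; exact hs.1)
    (by rw [hθK]; exact hs.2)
  have hnode : ∀ i, i ≤ K → θ i ∈ Set.Icc (0:ℝ) T := by
    intro i hi
    constructor
    · rw [← hθ0]; exact theta_mono K θ hθmono 0 i (Nat.zero_le _) hi
    · rw [← hθK]; exact theta_mono K θ hθmono i K hi le_rfl
  have hΔ : 0 < θ (j+1) - θ j := by have := hθmono j hj; linarith
  have hdm : 0 < dMax K θ := lt_of_lt_of_le hΔ (mesh_ub K θ hj)
  rw [decomp f g gi (θ j) (θ (j+1)) s (hθmono j hj) (hgi j hj s hsj)]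
  have hpsi : ‖((θ (j+1) - s) / (θ (j+1) - θ j)) • (f s - f (θ j))
      + ((s - θ j) / (θ (j+1) - θ j)) • (f s - f (θ (j+1)))‖
      ≤ Hr * (dMax K θ / 2) ^ β := by
    refine le_trans (psi_sup f hβ0 hβ1 hHr hH (hθmono j hj) (hnode j (by omega))
      (hnode (j+1) (by omega)) hsj) ?_
    have hz0 : 0 ≤ 2 * ((θ (j+1) - s) * (s - θ j)) / (θ (j+1) - θ j) := by
      have h1 := hsj.1; have h2 := hsj.2
      apply div_nonneg _ hΔ.le
      nlinarith
    have hzle : 2 * ((θ (j+1) - s) * (s - θ j)) / (θ (j+1) - θ j) ≤ dMax K θ / 2 := by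
      rw [div_le_div_iff₀ hΔ two_pos]
      nlinarith [sq_nonneg ((θ (j+1) - s) - (s - θ j)), mesh_ub K θ hj, hsj.1, hsj.2]
    exact mul_le_mul_of_nonneg_left (Real.rpow_le_rpow hz0 hzle hβ0) hHr
  have hP : ‖((θ (j+1) - s) / (θ (j+1) - θ j)) • (f (θ j) - g (θ j))
      + ((s - θ j) / (θ (j+1) - θ j)) • (f (θ (j+1)) - g (θ (j+1)))‖ ≤ Dr :=
    P_sup f g (hθmono j hj) hsj (hD j (by omega)) (hD (j+1) (by omega))
  have heq : Hr * (dMax K θ / 2) ^ β = 2 ^ (-β) * (dMax K θ) ^ β * Hr := by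
    rw [Real.div_rpow hdm.le (by norm_num : (0:ℝ) ≤ 2), Real.rpow_neg (by norm_num : (0:ℝ) ≤ 2)]
    ring
  calc ‖_ + _‖ ≤ _ := norm_add_le _ _
    _ ≤ Hr * (dMax K θ / 2) ^ β + Dr := add_le_add hpsi hP
    _ = Dr + 2 ^ (-β) * (dMax K θ) ^ β * Hr := by rw [heq]; ring

end Aux

section Aux2
set_option linter.unusedVariables false
set_option linter.unusedSectionVars false
set_option maxHeartbeats 2000000

variable {E : Type} [NormedAddCommGroup E] [NormedSpace ℝ E]

/-- pointwise Hölder bound for `f - gi` on `[0,T]`. -/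
lemma holder_pointwise (T : ℝ) (α β : ℝ) (hα0 : 0 ≤ α) (hα1 : α ≤ 1)
    (hαβ : α ≤ β) (hβ1 : β ≤ 1)
    (K : ℕ) (hK : 1 ≤ K) (θ : ℕ → ℝ) (hθ0 : θ 0 = 0) (hθK : θ K = T)
    (hθmono : ∀ j, j < K → θ j < θ (j + 1))
    (f g gi : ℝ → E)
    (hgi : ∀ j, j < K → ∀ s ∈ Set.Icc (θ j) (θ (j + 1)),
        gi s = ((θ (j + 1) - s) / (θ (j + 1) - θ j)) • g (θ j)
            + ((s - θ j) / (θ (j + 1) - θ j)) • g (θ (j + 1)))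
    {Dr Hr : ℝ} (hHr : 0 ≤ Hr)
    (hD : ∀ j, j ≤ K → ‖f (θ j) - g (θ j)‖ ≤ Dr)
    (hH : ∀ x ∈ Set.Icc (0:ℝ) T, ∀ y ∈ Set.Icc (0:ℝ) T, ‖f x - f y‖ ≤ Hr * |x - y| ^ β) :
    ∀ s ∈ Set.Icc (0:ℝ) T, ∀ t ∈ Set.Icc (0:ℝ) T,
    ‖(f s - gi s) - (f t - gi t)‖
      ≤ (2 * (dMax K θ) ^ (1 - α) / dMin K θ * Dr + 2 * (dMax K θ) ^ (β - α) * Hr)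
        * |s - t| ^ α := by
  have hβ0 : 0 ≤ β := le_trans hα0 hαβ
  have hDr0 : 0 ≤ Dr := le_trans (norm_nonneg _) (hD 0 (Nat.zero_le _))
  have hdn : 0 < dMin K θ := dMin_pos K hK θ hθmono
  have hdm : 0 < dMax K θ := lt_of_lt_of_le hdn (dMin_le_dMax K hK θ)
  have hnode : ∀ i, i ≤ K → θ i ∈ Set.Icc (0:ℝ) T := by
    intro i hi
    constructor
    · rw [← hθ0]; exact theta_mono K θ hθmono 0 i (Nat.zero_le _) hi
    · rw [← hθK]; exact theta_mono K θ hθmono i K hi le_rfl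
  have hCnn : 0 ≤ 2 * (dMax K θ) ^ (1 - α) / dMin K θ * Dr
      + 2 * (dMax K θ) ^ (β - α) * Hr := by
    have := Real.rpow_nonneg hdm.le (1 - α)
    have := Real.rpow_nonneg hdm.le (β - α)
    positivity
  have main : ∀ s ∈ Set.Icc (0:ℝ) T, ∀ t ∈ Set.Icc (0:ℝ) T, s < t →
      ‖(f s - gi s) - (f t - gi t)‖
      ≤ (2 * (dMax K θ) ^ (1 - α) / dMin K θ * Dr + 2 * (dMax K θ) ^ (β - α) * Hr)
        * (t - s) ^ α := by
    intro s hs t ht hst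
    obtain ⟨j, hj, hsj⟩ := exists_interval K hK θ hθmono (s := s) (by rw [hθ0]; exact hs.1)
      (by rw [hθK]; exact hs.2)
    obtain ⟨k, hk, htk⟩ := exists_interval K hK θ hθmono (s := t) (by rw [hθ0]; exact ht.1)
      (by rw [hθK]; exact ht.2)
    have hρ : 0 < t - s := by linarith
    have hjk : j ≤ k := by
      by_contra hcon
      have hk1j : k + 1 ≤ j := by omega
      have : θ (k+1) ≤ θ j := theta_mono K θ hθmono (k+1) j hk1j (by omega)
      have := htk.2
      have := hsj.1
      linarith
    have hΔj : 0 < θ (j+1) - θ j := by have := hθmono j hj; linarith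
    have hΔk : 0 < θ (k+1) - θ k := by have := hθmono k hk; linarith
    rw [decomp f g gi (θ j) (θ (j+1)) s (hθmono j hj) (hgi j hj s hsj),
      decomp f g gi (θ k) (θ (k+1)) t (hθmono k hk) (hgi k hk t htk)]
    set psis := ((θ (j+1) - s) / (θ (j+1) - θ j)) • (f s - f (θ j))
      + ((s - θ j) / (θ (j+1) - θ j)) • (f s - f (θ (j+1))) with hpsis
    set psit := ((θ (k+1) - t) / (θ (k+1) - θ k)) • (f t - f (θ k))
      + ((t - θ k) / (θ (k+1) - θ k)) • (f t - f (θ (k+1))) with hpsit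
    set Ps := ((θ (j+1) - s) / (θ (j+1) - θ j)) • (f (θ j) - g (θ j))
      + ((s - θ j) / (θ (j+1) - θ j)) • (f (θ (j+1)) - g (θ (j+1))) with hPs
    set Pt := ((θ (k+1) - t) / (θ (k+1) - θ k)) • (f (θ k) - g (θ k))
      + ((t - θ k) / (θ (k+1) - θ k)) • (f (θ (k+1)) - g (θ (k+1))) with hPt
    have htri : ‖(psis + Ps) - (psit + Pt)‖ ≤ ‖psis - psit‖ + ‖Ps - Pt‖ := by
      have : (psis + Ps) - (psit + Pt) = (psis - psit) + (Ps - Pt) := by abel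
      rw [this]; exact norm_add_le _ _
    -- P part
    have hPbound : ‖Ps - Pt‖ ≤ 2 * (dMax K θ) ^ (1 - α) / dMin K θ * Dr * (t - s) ^ α := by
      have h1 : ‖Ps - Pt‖ ≤ 2 * Dr / dMin K θ * (t - s) :=
        P_cross K θ f g hθmono hdn (fun i hi => mesh_lb K θ hi) hD hjk hk hst.le hsj htk
      have h2 : ‖Ps - Pt‖ ≤ 2 * Dr := by
        refine le_trans (norm_sub_le _ _) ?_
        have hb1 : ‖Ps‖ ≤ Dr := P_sup f g (hθmono j hj) hsj (hD j (by omega)) (hD (j+1) (by omega))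
        have hb2 : ‖Pt‖ ≤ Dr := P_sup f g (hθmono k hk) htk (hD k (by omega)) (hD (k+1) (by omega))
        linarith
      exact Ppart_final hdn (dMin_le_dMax K hK θ) hDr0 hρ hα0 hα1 h1 h2
    -- psi part
    have hpsibound : ‖psis - psit‖ ≤ 2 * (dMax K θ) ^ (β - α) * Hr * (t - s) ^ α := by
      rcases eq_or_lt_of_le hjk with rfl | hjk'
      · -- same interval
        have hb := psi_holder f hβ0 hβ1 hHr hH (hθmono j hj) (hnode j (by omega))
          (hnode (j+1) (by omega)) hsj htk
        rw [abs_of_neg (by linarith : s - t < 0), neg_sub] at hb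
        refine psipart_final hdm hHr hρ hα0 hαβ hβ1 (fun _ => hb) (fun hcon => absurd hcon ?_)
        push_neg
        calc t - s ≤ θ (j+1) - θ j := by have := hsj.1; have := htk.2; linarith
          _ ≤ dMax K θ := mesh_ub K θ hj
      · -- different intervals
        have hj1k : j + 1 ≤ k := hjk'
        have hmid : θ (j+1) ≤ θ k := theta_mono K θ hθmono (j+1) k hj1k (by omega)
        have hzs0 : 0 ≤ 2 * ((θ (j+1) - s) * (s - θ j)) / (θ (j+1) - θ j) := by
          apply div_nonneg _ hΔj.le
          have := hsj.1; have := hsj.2; nlinarith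
        have hzt0 : 0 ≤ 2 * ((θ (k+1) - t) * (t - θ k)) / (θ (k+1) - θ k) := by
          apply div_nonneg _ hΔk.le
          have := htk.1; have := htk.2; nlinarith
        have hbs := psi_sup f hβ0 hβ1 hHr hH (hθmono j hj) (hnode j (by omega))
          (hnode (j+1) (by omega)) hsj
        have hbt := psi_sup f hβ0 hβ1 hHr hH (hθmono k hk) (hnode k (by omega))
          (hnode (k+1) (by omega)) htk
        have htri2 : ‖psis - psit‖ ≤ ‖psis‖ + ‖psit‖ := norm_sub_le _ _
        refine psipart_final hdm hHr hρ hα0 hαβ hβ1 (fun _ => ?_) (fun hcon => ?_)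
        · -- bound by 2 Hr (t-s)^β via endpoint distances
          set u := θ (j+1) - s with hu
          set v := t - θ k with hv
          have hu0 : 0 ≤ u := by have := hsj.2; simp [hu]; linarith
          have hv0 : 0 ≤ v := by have := htk.1; simp [hv]; linarith
          have huv : u + v ≤ t - s := by simp [hu, hv]; linarith
          have hzs : 2 * ((θ (j+1) - s) * (s - θ j)) / (θ (j+1) - θ j) ≤ 2 * u := by
            rw [div_le_iff₀ hΔj]
            have := hsj.1; have := hsj.2
            nlinarith
          have hzt : 2 * ((θ (k+1) - t) * (t - θ k)) / (θ (k+1) - θ k) ≤ 2 * v := by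
            rw [div_le_iff₀ hΔk]
            have := htk.1; have := htk.2
            nlinarith
          have hbs' : ‖psis‖ ≤ Hr * (2 * u) ^ β :=
            le_trans hbs (mul_le_mul_of_nonneg_left (Real.rpow_le_rpow hzs0 hzs hβ0) hHr)
          have hbt' : ‖psit‖ ≤ Hr * (2 * v) ^ β :=
            le_trans hbt (mul_le_mul_of_nonneg_left (Real.rpow_le_rpow hzt0 hzt hβ0) hHr)
          have hjen : (2 * u) ^ β + (2 * v) ^ β ≤ 2 * (u + v) ^ β := by
            have := jensen2 (p := β) (lam := 1/2) (mu := 1/2) (a := 2*u) (b := 2*v)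
              hβ0 hβ1 (by norm_num) (by norm_num) (by norm_num) (by linarith) (by linarith)
            have he : (1:ℝ)/2 * (2*u) + 1/2 * (2*v) = u + v := by ring
            rw [he] at this
            linarith
          have hmono : (u + v) ^ β ≤ (t - s) ^ β :=
            Real.rpow_le_rpow (by linarith) huv hβ0
          calc ‖psis - psit‖ ≤ ‖psis‖ + ‖psit‖ := htri2
            _ ≤ Hr * (2 * u) ^ β + Hr * (2 * v) ^ β := add_le_add hbs' hbt'
            _ = Hr * ((2 * u) ^ β + (2 * v) ^ β) := by ring
            _ ≤ Hr * (2 * (u + v) ^ β) := mul_le_mul_of_nonneg_left hjen hHr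
            _ ≤ Hr * (2 * (t - s) ^ β) := by
                refine mul_le_mul_of_nonneg_left ?_ hHr
                linarith
            _ = 2 * Hr * (t - s) ^ β := by ring
        · -- bound by 2 Hr (dm/2)^β
          have hzs : 2 * ((θ (j+1) - s) * (s - θ j)) / (θ (j+1) - θ j) ≤ dMax K θ / 2 := by
            rw [div_le_div_iff₀ hΔj two_pos]
            nlinarith [sq_nonneg ((θ (j+1) - s) - (s - θ j)), mesh_ub K θ hj, hsj.1, hsj.2]
          have hzt : 2 * ((θ (k+1) - t) * (t - θ k)) / (θ (k+1) - θ k) ≤ dMax K θ / 2 := by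
            rw [div_le_div_iff₀ hΔk two_pos]
            nlinarith [sq_nonneg ((θ (k+1) - t) - (t - θ k)), mesh_ub K θ hk, htk.1, htk.2]
          have hbs' : ‖psis‖ ≤ Hr * (dMax K θ / 2) ^ β :=
            le_trans hbs (mul_le_mul_of_nonneg_left (Real.rpow_le_rpow hzs0 hzs hβ0) hHr)
          have hbt' : ‖psit‖ ≤ Hr * (dMax K θ / 2) ^ β :=
            le_trans hbt (mul_le_mul_of_nonneg_left (Real.rpow_le_rpow hzt0 hzt hβ0) hHr)
          calc ‖psis - psit‖ ≤ ‖psis‖ + ‖psit‖ := htri2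
            _ ≤ Hr * (dMax K θ / 2) ^ β + Hr * (dMax K θ / 2) ^ β := add_le_add hbs' hbt'
            _ = 2 * Hr * (dMax K θ / 2) ^ β := by ring
    calc ‖(psis + Ps) - (psit + Pt)‖ ≤ ‖psis - psit‖ + ‖Ps - Pt‖ := htri
      _ ≤ 2 * (dMax K θ) ^ (β - α) * Hr * (t - s) ^ α
          + 2 * (dMax K θ) ^ (1 - α) / dMin K θ * Dr * (t - s) ^ α :=
        add_le_add hpsibound hPbound
      _ = (2 * (dMax K θ) ^ (1 - α) / dMin K θ * Dr + 2 * (dMax K θ) ^ (β - α) * Hr)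
          * (t - s) ^ α := by ring
  intro s hs t ht
  rcases lt_trichotomy s t with h | rfl | h
  · have := main s hs t ht h
    rwa [abs_of_neg (by linarith : s - t < 0), neg_sub]
  · simp only [sub_self, norm_zero]
    positivity
  · have := main t ht s hs h
    rw [norm_sub_rev] at this
    rwa [abs_of_pos (by linarith : (0:ℝ) < s - t)]
end Aux2

set_option maxHeartbeats 2000000 in
/-- **Lemma 2.6** (approximations by piecewise affine linear functions):
Hölder estimates for `f − [g]_θ`, where `gi = [g]_θ` is the piecewise affine
linear interpolation of `g` at the nodes of the partition `θ`. -/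
theorem lem_hoelderconv2
    {E : Type} [NormedAddCommGroup E] [NormedSpace ℝ E]
    (T : ℝ) (hT : 0 < T)
    (α β : ℝ) (hα : α ∈ Set.Icc (0:ℝ) 1) (hβ : β ∈ Set.Icc α 1)
    (K : ℕ) (hK : 1 ≤ K) (θ : ℕ → ℝ)
    (hθ0 : θ 0 = 0) (hθK : θ K = T)
    (hθmono : ∀ j, j < K → θ j < θ (j + 1))
    (f g gi : ℝ → E)
    (hgi : ∀ j, j < K → ∀ s ∈ Set.Icc (θ j) (θ (j + 1)),
        gi s = ((θ (j + 1) - s) / (θ (j + 1) - θ j)) • g (θ j)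
            + ((s - θ j) / (θ (j + 1) - θ j)) • g (θ (j + 1))) :
    holderSemiOn T α (fun t => f t - gi t)
      ≤ ENNReal.ofReal (2 * (dMax K θ) ^ (1 - α) / dMin K θ) *
          (⨆ j : Fin (K + 1), (‖f (θ j) - g (θ j)‖₊ : ℝ≥0∞))
        + ENNReal.ofReal (2 * (dMax K θ) ^ (β - α)) * holderSemiOn T β f
    ∧
    holderNormOn T α (fun t => f t - gi t)
      ≤ ENNReal.ofReal (2 * (dMax K θ) ^ (1 - α) / dMin K θ + 1) *
          (⨆ j : Fin (K + 1), (‖f (θ j) - g (θ j)‖₊ : ℝ≥0∞))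
        + ENNReal.ofReal ((2 * (dMax K θ) ^ (-α) + 2 ^ (-β)) * (dMax K θ) ^ β) *
            holderSemiOn T β f := by
  obtain ⟨hα0, hα1⟩ := hα
  obtain ⟨hαβ, hβ1⟩ := hβ
  have hβ0 : 0 ≤ β := le_trans hα0 hαβ
  have hdn : 0 < dMin K θ := dMin_pos K hK θ hθmono
  have hdm : 0 < dMax K θ := lt_of_lt_of_le hdn (dMin_le_dMax K hK θ)
  set dm := dMax K θ
  set dn := dMin K θ
  have hc1 : 0 < 2 * dm ^ (1 - α) / dn := by
    apply div_pos _ hdn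
    have := Real.rpow_pos_of_pos hdm (1 - α)
    linarith
  have hc2 : 0 < 2 * dm ^ (β - α) := by
    have := Real.rpow_pos_of_pos hdm (β - α)
    linarith
  have hc3 : 0 < 2 * dm ^ (1 - α) / dn + 1 := by linarith
  have hc4 : 0 < (2 * dm ^ (-α) + 2 ^ (-β)) * dm ^ β := by
    have h1 := Real.rpow_pos_of_pos hdm (-α)
    have h2 := Real.rpow_pos_of_pos (by norm_num : (0:ℝ) < 2) (-β)
    have h3 := Real.rpow_pos_of_pos hdm β
    positivity
  set D := ⨆ j : Fin (K + 1), (‖f (θ j) - g (θ j)‖₊ : ℝ≥0∞) with hD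
  set H := holderSemiOn T β f with hH
  rcases eq_or_ne D ⊤ with hDtop | hDtop
  · constructor
    · rw [hDtop, ENNReal.mul_top (ENNReal.ofReal_pos.2 hc1).ne']
      simp
    · rw [hDtop, ENNReal.mul_top (ENNReal.ofReal_pos.2 hc3).ne']
      simp
  rcases eq_or_ne H ⊤ with hHtop | hHtop
  · constructor
    · rw [hHtop, ENNReal.mul_top (ENNReal.ofReal_pos.2 hc2).ne']
      simp
    · rw [hHtop, ENNReal.mul_top (ENNReal.ofReal_pos.2 hc4).ne']
      simp
  -- finite case
  set Dr := D.toReal with hDr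
  set Hr := H.toReal with hHrdef
  have hDeq : D = ENNReal.ofReal Dr := (ENNReal.ofReal_toReal hDtop).symm
  have hHeq : H = ENNReal.ofReal Hr := (ENNReal.ofReal_toReal hHtop).symm
  have hHr0 : 0 ≤ Hr := ENNReal.toReal_nonneg
  have hDnode : ∀ j, j ≤ K → ‖f (θ j) - g (θ j)‖ ≤ Dr := by
    intro j hj
    have h1 : (‖f (θ j) - g (θ j)‖₊ : ℝ≥0∞) ≤ D := by
      rw [hD]
      exact le_iSup (fun i : Fin (K+1) => (‖f (θ i) - g (θ i)‖₊ : ℝ≥0∞)) ⟨j, by omega⟩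
    simpa using ENNReal.toReal_mono hDtop h1
  have hHbound : ∀ x ∈ Set.Icc (0:ℝ) T, ∀ y ∈ Set.Icc (0:ℝ) T,
      ‖f x - f y‖ ≤ Hr * |x - y| ^ β := by
    intro x hx y hy
    rcases eq_or_ne x y with rfl | hxy
    · simp only [sub_self, norm_zero]
      positivity
    · have hterm : (‖f x - f y‖₊ : ℝ≥0∞) / ENNReal.ofReal (|x - y| ^ β) ≤ H := by
        rw [hH]
        unfold holderSemiOn
        exact le_iSup_of_le x (le_iSup_of_le y (le_iSup_of_le hx (le_iSup_of_le hy
          (le_iSup_of_le hxy le_rfl))))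
      have habs : 0 < |x - y| := abs_pos.2 (sub_ne_zero.2 hxy)
      have hb0 : ENNReal.ofReal (|x - y| ^ β) ≠ 0 :=
        (ENNReal.ofReal_pos.2 (Real.rpow_pos_of_pos habs β)).ne'
      have h2 : (‖f x - f y‖₊ : ℝ≥0∞) ≤ H * ENNReal.ofReal (|x - y| ^ β) :=
        (ENNReal.div_le_iff hb0 ENNReal.ofReal_ne_top).1 hterm
      have h3 := ENNReal.toReal_mono (ENNReal.mul_ne_top hHtop ENNReal.ofReal_ne_top) h2
      rw [ENNReal.toReal_mul, ENNReal.toReal_ofReal (Real.rpow_nonneg habs.le β)] at h3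
      simpa using h3
  -- seminorm bound
  have hsemi : holderSemiOn T α (fun t => f t - gi t)
      ≤ ENNReal.ofReal (2 * dm ^ (1 - α) / dn) * D + ENNReal.ofReal (2 * dm ^ (β - α)) * H := by
    rw [hDeq, hHeq, ← ENNReal.ofReal_mul hc1.le, ← ENNReal.ofReal_mul hc2.le,
      ← ENNReal.ofReal_add (by positivity) (by positivity)]
    unfold holderSemiOn
    refine iSup_le fun s => iSup_le fun t => iSup_le fun hs => iSup_le fun ht =>
      iSup_le fun hst => ?_
    have habs : 0 < |s - t| := abs_pos.2 (sub_ne_zero.2 hst)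
    have hb0 : ENNReal.ofReal (|s - t| ^ α) ≠ 0 :=
      (ENNReal.ofReal_pos.2 (Real.rpow_pos_of_pos habs α)).ne'
    rw [ENNReal.div_le_iff hb0 ENNReal.ofReal_ne_top, ← ENNReal.ofReal_mul (by positivity),
      ← ENNReal.ofReal_coe_nnreal, coe_nnnorm]
    apply ENNReal.ofReal_le_ofReal
    have := holder_pointwise T α β hα0 hα1 hαβ hβ1 K hK θ hθ0 hθK hθmono f g gi hgi
      hHr0 hDnode hHbound s hs t ht
    calc ‖(f s - gi s) - (f t - gi t)‖
        ≤ (2 * dm ^ (1 - α) / dn * Dr + 2 * dm ^ (β - α) * Hr) * |s - t| ^ α := this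
      _ = (2 * dm ^ (1 - α) / dn * Dr + 2 * dm ^ (β - α) * Hr) * |s - t| ^ α := by ring
  refine ⟨hsemi, ?_⟩
  -- sup norm bound
  have hDr0 : 0 ≤ Dr := le_trans (norm_nonneg _) (hDnode 0 (Nat.zero_le _))
  have hsup : supNormOn T (fun t => f t - gi t)
      ≤ ENNReal.ofReal (Dr + 2 ^ (-β) * dm ^ β * Hr) := by
    unfold supNormOn
    refine iSup_le fun s => iSup_le fun hs => ?_
    rw [← ENNReal.ofReal_coe_nnreal, coe_nnnorm]
    exact ENNReal.ofReal_le_ofReal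
      (sup_pointwise T β hβ0 hβ1 K hK θ hθ0 hθK hθmono f g gi hgi hHr0 hDnode hHbound hs)
  have hrw : dm ^ (β - α) = dm ^ (-α) * dm ^ β := by
    rw [← Real.rpow_add hdm]; ring_nf
  calc holderNormOn T α (fun t => f t - gi t)
      = supNormOn T (fun t => f t - gi t) + holderSemiOn T α (fun t => f t - gi t) := rfl
    _ ≤ ENNReal.ofReal (Dr + 2 ^ (-β) * dm ^ β * Hr)
        + (ENNReal.ofReal (2 * dm ^ (1 - α) / dn) * D + ENNReal.ofReal (2 * dm ^ (β - α)) * H) :=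
        add_le_add hsup hsemi
    _ = ENNReal.ofReal (Dr + 2 ^ (-β) * dm ^ β * Hr)
        + ENNReal.ofReal (2 * dm ^ (1 - α) / dn * Dr + 2 * dm ^ (β - α) * Hr) := by
        rw [hDeq, hHeq, ← ENNReal.ofReal_mul hc1.le, ← ENNReal.ofReal_mul hc2.le,
          ← ENNReal.ofReal_add (by positivity) (by positivity)]
    _ = ENNReal.ofReal ((2 * dm ^ (1 - α) / dn + 1) * Dr
        + ((2 * dm ^ (-α) + 2 ^ (-β)) * dm ^ β) * Hr) := by
        rw [← ENNReal.ofReal_add (by positivity) (by positivity)]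
        congr 1
        rw [hrw]; ring
    _ = ENNReal.ofReal (2 * dm ^ (1 - α) / dn + 1) * D
        + ENNReal.ofReal ((2 * dm ^ (-α) + 2 ^ (-β)) * dm ^ β) * H := by
        rw [hDeq, hHeq, ← ENNReal.ofReal_mul hc3.le, ← ENNReal.ofReal_mul hc4.le,
          ← ENNReal.ofReal_add (by positivity) (by positivity)]
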